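/- Let f⁰ ∈ (ℝ³)^n be the vertices of an n-gon, and let f¹ = A(n)f⁰ (applying A(n) coordinatewise to the n-tuple of points in ℝ³). Then the 'solution energy' ‖f¹ - Tf¹‖² satisfies ‖f¹ - Tf¹‖² ≤ λ_1(n)² ‖f⁰ - Tf⁰‖², where λ_1(n) = 1/(1+4sin²(π/n)). -/

import Mathlib

open Matrix Real Finset

/-- The cyclic shift permutation matrix: `T eᵢ = e_{i+1}`. -/
def shiftMat (n : ℕ) [NeZero n] : Matrix (Fin n) (Fin n) ℝ :=
  Matrix.of fun i j => if j = i + 1 then 1 else 0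

/-- The matrix `B(n) = 3 Iₙ - T - Tᵗ`. -/
def Bmat (n : ℕ) [NeZero n] : Matrix (Fin n) (Fin n) ℝ :=
  (3 : ℝ) • (1 : Matrix (Fin n) (Fin n) ℝ) - shiftMat n - (shiftMat n)ᵀ

/-- `A(n) = B(n)⁻¹`. -/
noncomputable def Amat (n : ℕ) [NeZero n] : Matrix (Fin n) (Fin n) ℝ := (Bmat n)⁻¹

/-- `λ₁(n) = 1/(1 + 4 sin²(π/n))`. -/
noncomputable def lam1 (n : ℕ) : ℝ := 1 / (1 + 4 * Real.sin (Real.pi / n) ^ 2)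


/-- Componentwise action of an `n × n` matrix on an `n`-tuple of points of `ℝ³`. -/
noncomputable def applyMat {n : ℕ} (M : Matrix (Fin n) (Fin n) ℝ)
    (g : Fin n → EuclideanSpace ℝ (Fin 3)) : Fin n → EuclideanSpace ℝ (Fin 3) :=
  fun i => ∑ j, M i j • g j

/-- The cyclic shift acting on `n`-tuples of points of `ℝ³`. -/
def shiftTup {n : ℕ} [NeZero n] (g : Fin n → EuclideanSpace ℝ (Fin 3)) :
    Fin n → EuclideanSpace ℝ (Fin 3) := fun i => g (i + 1)

/-- `‖g‖² = Σᵢ |gᵢ|²`. -/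
noncomputable def sqE {n : ℕ} (g : Fin n → EuclideanSpace ℝ (Fin 3)) : ℝ :=
  ∑ i, ‖g i‖ ^ 2

/-! ### DFT preliminaries -/

section DFT

open AddChar ZMod Complex

variable {N : ℕ} [NeZero N]

lemma char_sum (t : ZMod N) :
    ∑ k, ZMod.stdAddChar (t * k) = if t = 0 then (N : ℂ) else 0 := by
  split_ifs with h
  · simp [h]
  · exact AddChar.sum_eq_zero_of_ne_one (ZMod.isPrimitive_stdAddChar N h)

lemma dft_pair (Φ Ψ : ZMod N → ℂ) :
    ∑ k, ZMod.dft Φ k * ZMod.dft Ψ (-k) = (N : ℂ) * ∑ j, Φ j * Ψ j := by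
  simp only [ZMod.dft_apply, smul_eq_mul, mul_neg, neg_neg]
  calc ∑ k, (∑ j, stdAddChar (-(j * k)) * Φ j) * (∑ l, stdAddChar (l * k) * Ψ l)
      = ∑ k, ∑ j, ∑ l, (Φ j * Ψ l) * stdAddChar ((l - j) * k) := by
        refine Finset.sum_congr rfl fun k _ => ?_
        rw [Finset.sum_mul_sum]
        refine Finset.sum_congr rfl fun j _ => Finset.sum_congr rfl fun l _ => ?_
        have : (l - j) * k = l * k + -(j * k) := by ring
        rw [this, AddChar.map_add_eq_mul]
        ring
    _ = ∑ j, ∑ l, (Φ j * Ψ l) * ∑ k, stdAddChar ((l - j) * k) := by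
        rw [Finset.sum_comm]
        refine Finset.sum_congr rfl fun j _ => ?_
        rw [Finset.sum_comm]
        simp [Finset.mul_sum]
    _ = ∑ j, ∑ l, (if l = j then (Φ j * Ψ l) * N else 0) := by
        refine Finset.sum_congr rfl fun j _ => Finset.sum_congr rfl fun l _ => ?_
        rw [char_sum]
        simp only [sub_eq_zero]
        split_ifs <;> simp
    _ = (N : ℂ) * ∑ j, Φ j * Ψ j := by
        simp [Finset.sum_ite_eq', Finset.mul_sum, mul_comm]

lemma conj_stdAddChar (x : ZMod N) :
    (starRingEnd ℂ) (ZMod.stdAddChar x) = ZMod.stdAddChar (-x) := by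
  rw [ZMod.stdAddChar_apply, ZMod.stdAddChar_apply, ← Circle.coe_inv_eq_conj,
    ← AddChar.map_neg_eq_inv]

lemma dft_real_neg (V : ZMod N → ℝ) (k : ZMod N) :
    ZMod.dft (fun j => (V j : ℂ)) (-k) = (starRingEnd ℂ) (ZMod.dft (fun j => (V j : ℂ)) k) := by
  simp only [ZMod.dft_apply, smul_eq_mul, map_sum, _root_.map_mul, conj_stdAddChar,
    Complex.conj_ofReal, mul_neg, neg_neg]

lemma parseval_real (V : ZMod N → ℝ) :
    ∑ k, Complex.normSq (ZMod.dft (fun j => (V j : ℂ)) k) = (N : ℝ) * ∑ j, V j ^ 2 := by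
  have h := dft_pair (N := N) (fun j => (V j : ℂ)) (fun j => (V j : ℂ))
  have h2 : ∑ k, ZMod.dft (fun j => (V j : ℂ)) k * ZMod.dft (fun j => (V j : ℂ)) (-k)
      = ((∑ k, Complex.normSq (ZMod.dft (fun j => (V j : ℂ)) k) : ℝ) : ℂ) := by
    push_cast
    refine Finset.sum_congr rfl fun k _ => ?_
    rw [dft_real_neg, Complex.mul_conj]
  rw [h2] at h
  have h3 : (((N : ℝ) * ∑ j, V j ^ 2 : ℝ) : ℂ) = ((N : ℂ) * ∑ j, (V j : ℂ) * (V j : ℂ)) := by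
    push_cast
    rw [Finset.mul_sum, Finset.mul_sum]
    exact Finset.sum_congr rfl fun j _ => by ring
  rw [← h3] at h
  exact_mod_cast h

lemma dft_shift (Φ : ZMod N → ℂ) (k : ZMod N) :
    ZMod.dft (fun j => Φ j - Φ (j + 1)) k = (1 - ZMod.stdAddChar k) * ZMod.dft Φ k := by
  simp only [ZMod.dft_apply, smul_eq_mul, mul_sub]
  rw [Finset.sum_sub_distrib]
  have h : ∑ j, stdAddChar (-(j * k)) * Φ (j + 1)
      = stdAddChar k * ∑ j, stdAddChar (-(j * k)) * Φ j := by
    rw [Finset.mul_sum]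
    apply Fintype.sum_equiv (Equiv.addRight (1 : ZMod N))
    intro j
    simp only [Equiv.coe_addRight]
    rw [← mul_assoc, ← AddChar.map_add_eq_mul]
    congr 2
    ring
  rw [h]; ring

lemma normSq_one_sub_char (k : ZMod N) :
    Complex.normSq (1 - ZMod.stdAddChar k) = 4 * Real.sin (Real.pi * k.val / N) ^ 2 := by
  have hc : ZMod.stdAddChar k = Complex.exp ((2 * Real.pi * k.val / N : ℝ) * Complex.I) := by
    rw [ZMod.stdAddChar_apply, ZMod.toCircle_apply]
    congr 1
    push_cast
    ring
  rw [hc, Complex.exp_mul_I]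
  set θ : ℝ := 2 * Real.pi * k.val / N with hθ
  have h1 : (1 : ℂ) - (Complex.cos θ + Complex.sin θ * Complex.I)
      = ((1 - Real.cos θ : ℝ) : ℂ) + ((-Real.sin θ : ℝ) : ℂ) * Complex.I := by
    push_cast
    ring
  rw [h1, Complex.normSq_add_mul_I]
  have h2 : Real.sin (Real.pi * k.val / N) ^ 2 = (1 - Real.cos θ) / 2 := by
    have h3 : Real.pi * k.val / N = θ / 2 := by rw [hθ]; ring
    rw [h3]
    have h4 : 2 * (θ / 2) = θ := by ring
    have hcos := Real.cos_two_mul (θ / 2)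
    rw [h4] at hcos
    have hpy := Real.sin_sq_add_cos_sq (θ / 2)
    nlinarith [hcos, hpy]
  rw [h2]
  have := Real.sin_sq_add_cos_sq θ
  nlinarith [this]

lemma sin_lower {N : ℕ} (hN : 2 ≤ N) {m : ℕ} (h1 : 1 ≤ m) (h2 : m < N) :
    Real.sin (Real.pi / N) ≤ Real.sin (Real.pi * m / N) := by
  have hNpos : (0 : ℝ) < N := by positivity
  have hpi := Real.pi_pos
  have key : ∀ l : ℕ, 1 ≤ l → 2 * l ≤ N → Real.sin (Real.pi / N) ≤ Real.sin (Real.pi * l / N) := by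
    intro l hl1 hl2
    have hl1' : (1 : ℝ) ≤ l := by exact_mod_cast hl1
    have hl2' : (2 * l : ℝ) ≤ N := by exact_mod_cast hl2
    apply Real.sin_le_sin_of_le_of_le_pi_div_two
    · have : (0:ℝ) ≤ Real.pi / N := by positivity
      linarith [Real.pi_div_two_pos]
    · rw [div_le_div_iff₀ hNpos (by norm_num : (0:ℝ) < 2)]
      nlinarith
    · rw [div_le_div_iff₀ hNpos hNpos]
      nlinarith [mul_nonneg (mul_nonneg hpi.le (sub_nonneg.2 hl1')) hNpos.le]
  rcases le_or_gt (2 * m) N with h | h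
  · exact key m h1 h
  · have hcast : ((N - m : ℕ) : ℝ) = (N : ℝ) - m := by
      push_cast [Nat.cast_sub h2.le]; ring
    have hm' : Real.sin (Real.pi * m / N) = Real.sin (Real.pi * (N - m : ℕ) / N) := by
      rw [hcast, ← Real.sin_pi_sub]
      congr 1
      field_simp
    rw [hm']
    exact key (N - m) (by omega) (by omega)

lemma wirtinger (hN : 3 ≤ N) (V : ZMod N → ℝ) (hV : ∑ j, V j = 0) :
    4 * Real.sin (Real.pi / N) ^ 2 * ∑ j, V j ^ 2 ≤ ∑ j, (V j - V (j + 1)) ^ 2 := by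
  set Φ : ZMod N → ℂ := fun j => (V j : ℂ) with hΦ
  set c := ZMod.dft Φ with hc
  have hP1 : ∑ k, Complex.normSq (c k) = (N : ℝ) * ∑ j, V j ^ 2 := parseval_real V
  have hfun : (fun j => ((V j - V (j + 1) : ℝ) : ℂ)) = fun j => Φ j - Φ (j + 1) := by
    funext j; push_cast [hΦ]; ring
  have hP2 : ∑ k, Complex.normSq ((1 - ZMod.stdAddChar k) * c k)
      = (N : ℝ) * ∑ j, (V j - V (j + 1)) ^ 2 := by
    have := parseval_real (fun j => V j - V (j + 1))
    rw [show ZMod.dft (fun j => ((V j - V (j+1) : ℝ) : ℂ)) = ZMod.dft (fun j => Φ j - Φ (j+1))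
      from congrArg _ hfun] at this
    simpa only [dft_shift] using this
  have hc0 : c 0 = 0 := by
    rw [hc, ZMod.dft_apply_zero]
    rw [hΦ]
    beta_reduce; exact_mod_cast congrArg (Complex.ofReal) hV
  have hterm : ∀ k : ZMod N, 4 * Real.sin (Real.pi / N) ^ 2 * Complex.normSq (c k)
      ≤ Complex.normSq ((1 - ZMod.stdAddChar k) * c k) := by
    intro k
    rw [Complex.normSq_mul, normSq_one_sub_char]
    by_cases hk : k = 0
    · simp [hk, hc0]
    · have h1 : 1 ≤ k.val := Nat.one_le_iff_ne_zero.2 (fun h => hk ((ZMod.val_eq_zero k).1 h))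
      have h2 : k.val < N := ZMod.val_lt k
      have hs := sin_lower (by omega) h1 h2
      have hnn : 0 ≤ Real.sin (Real.pi / N) := by
        apply Real.sin_nonneg_of_nonneg_of_le_pi
        · positivity
        · rw [div_le_iff₀ (by positivity)]
          nlinarith [Real.pi_pos, (by exact_mod_cast hN : (3:ℝ) ≤ N),
            mul_le_mul_of_nonneg_left (by exact_mod_cast hN : (3:ℝ) ≤ N) Real.pi_pos.le]
      have := pow_le_pow_left₀ hnn hs 2
      nlinarith [Complex.normSq_nonneg (c k)]
  have hsum := Finset.sum_le_sum (fun k (_ : k ∈ univ) => hterm k)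
  rw [← Finset.mul_sum, hP1, hP2] at hsum
  have hNpos : (0 : ℝ) < N := by positivity
  rw [show (4:ℝ) * Real.sin (Real.pi / N) ^ 2 * ((N:ℝ) * ∑ j, V j ^ 2)
    = (N:ℝ) * (4 * Real.sin (Real.pi / N) ^ 2 * ∑ j, V j ^ 2) from by ring] at hsum
  exact le_of_mul_le_mul_left hsum hNpos

end DFT

/-! ### Transfer from `ZMod n` to `Fin n` -/

section Transfer
variable {n : ℕ} [NeZero n]

def toFin (x : ZMod n) : Fin n := ⟨x.val, ZMod.val_lt x⟩

lemma toFin_bij : Function.Bijective (toFin (n := n)) := by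
  rw [Fintype.bijective_iff_injective_and_card]
  constructor
  · intro x y h
    have : x.val = y.val := congrArg Fin.val h
    exact ZMod.val_injective n this
  · simp [ZMod.card]

lemma toFin_add_one (hn : 3 ≤ n) (x : ZMod n) : toFin (x + 1) = toFin x + 1 := by
  haveI : Fact (1 < n) := ⟨by omega⟩
  apply Fin.ext
  show (x + 1).val = (toFin x + 1).val
  rw [ZMod.val_add, ZMod.val_one]
  rw [Fin.add_def]
  have hone : (1 : Fin n).val = 1 % n := Fin.val_one' n
  have h1n : 1 % n = 1 := Nat.mod_eq_of_lt (by omega)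
  simp only [toFin, hone, h1n]

lemma fin_wirtinger (hn : 3 ≤ n) (v : Fin n → ℝ) (hv : ∑ i, v i = 0) :
    4 * Real.sin (Real.pi / n) ^ 2 * ∑ i, v i ^ 2 ≤ ∑ i, (v i - v (i + 1)) ^ 2 := by
  have h1 : ∑ j : ZMod n, v (toFin j) ^ 2 = ∑ i, v i ^ 2 :=
    Fintype.sum_bijective toFin toFin_bij _ _ fun j => rfl
  have h2 : ∑ j : ZMod n, v (toFin j) = ∑ i, v i :=
    Fintype.sum_bijective toFin toFin_bij _ _ fun j => rfl
  have h3 : ∑ j : ZMod n, (v (toFin j) - v (toFin j + 1)) ^ 2 = ∑ i, (v i - v (i + 1)) ^ 2 :=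
    Fintype.sum_bijective toFin toFin_bij _ _ fun j => rfl
  have hw := wirtinger hn (fun j => v (toFin j)) (by rw [h2]; exact hv)
  simp only [toFin_add_one hn] at hw
  rw [h1, h3] at hw
  exact hw

end Transfer

/-! ### Matrix algebra -/

section MatrixAlg
variable {n : ℕ} [NeZero n]

lemma shiftMat_mulVec (v : Fin n → ℝ) (i : Fin n) : (shiftMat n).mulVec v i = v (i + 1) := by
  simp [shiftMat, Matrix.mulVec, dotProduct]

lemma shiftMatT_mulVec (v : Fin n → ℝ) (i : Fin n) :
    (shiftMat n)ᵀ.mulVec v i = v (i - 1) := by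
  simp only [shiftMat, Matrix.mulVec, dotProduct, Matrix.transpose_apply, Matrix.of_apply]
  rw [Finset.sum_eq_single (i - 1)]
  · simp
  · intro j _ hj
    rw [if_neg, zero_mul]
    intro h
    exact hj (by rw [h]; simp)
  · simp

lemma Bmat_mulVec (v : Fin n → ℝ) (i : Fin n) :
    (Bmat n).mulVec v i = 3 * v i - v (i + 1) - v (i - 1) := by
  simp [Bmat, Matrix.sub_mulVec, shiftMat_mulVec, shiftMatT_mulVec, Matrix.smul_mulVec]

lemma sum_shift (f : Fin n → ℝ) : ∑ i, f (i + 1) = ∑ i, f i :=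
  Fintype.sum_equiv (Equiv.addRight (1 : Fin n)) _ _ fun i => rfl

lemma quadB (v : Fin n → ℝ) :
    v ⬝ᵥ (Bmat n).mulVec v = ∑ i, v i ^ 2 + ∑ i, (v i - v (i + 1)) ^ 2 := by
  have h1 : ∑ i, v i * v (i - 1) = ∑ i, v (i + 1) * v i := by
    rw [← sum_shift (fun i => v i * v (i - 1))]
    exact Finset.sum_congr rfl fun i _ => by rw [add_sub_cancel_right]
  have h2 : ∑ i, v (i + 1) ^ 2 = ∑ i, v i ^ 2 := sum_shift (fun i => v i ^ 2)
  simp only [dotProduct, Bmat_mulVec]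
  have e1 : ∀ i : Fin n, v i * (3 * v i - v (i + 1) - v (i - 1))
      = 3 * v i ^ 2 - v i * v (i + 1) - v i * v (i - 1) := fun i => by ring
  have e2 : ∀ i : Fin n, (v i - v (i + 1)) ^ 2
      = v i ^ 2 + v (i + 1) ^ 2 - 2 * (v i * v (i + 1)) := fun i => by ring
  have h3 : ∑ i, v (i + 1) * v i = ∑ i, v i * v (i + 1) :=
    Finset.sum_congr rfl fun i _ => mul_comm _ _
  simp only [e1, e2, Finset.sum_sub_distrib, Finset.sum_add_distrib, h2, h1, h3,
    ← Finset.mul_sum]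
  ring

lemma Bmat_det_isUnit : IsUnit (Bmat n).det := by
  rw [isUnit_iff_ne_zero]
  intro hdet
  obtain ⟨v, hv, hBv⟩ := (Matrix.exists_mulVec_eq_zero_iff).2 hdet
  have hq : v ⬝ᵥ (Bmat n).mulVec v = 0 := by rw [hBv]; simp
  rw [quadB] at hq
  have h1 : ∑ i, v i ^ 2 = 0 := by
    have ha : (0:ℝ) ≤ ∑ i, v i ^ 2 := Finset.sum_nonneg fun i _ => sq_nonneg _
    have hb : (0:ℝ) ≤ ∑ i, (v i - v (i + 1)) ^ 2 := Finset.sum_nonneg fun i _ => sq_nonneg _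
    linarith
  apply hv
  funext i
  have := (Finset.sum_eq_zero_iff_of_nonneg (fun i _ => sq_nonneg (v i))).1 h1 i (mem_univ i)
  exact pow_eq_zero_iff (by norm_num) |>.1 this

lemma shift_orth : shiftMat n * (shiftMat n)ᵀ = 1 := by
  ext i j
  simp only [Matrix.mul_apply, shiftMat, Matrix.transpose_apply, Matrix.of_apply,
    Matrix.one_apply]
  rw [Finset.sum_eq_single (i + 1)]
  · rw [if_pos rfl, one_mul]
    by_cases h : i = j
    · subst h; simp
    · rw [if_neg fun hc => h (add_right_cancel hc), if_neg h]
  · intro k _ hk; rw [if_neg fun h => hk h, zero_mul]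
  · simp

lemma shift_orth' : (shiftMat n)ᵀ * shiftMat n = 1 := by
  ext i j
  simp only [Matrix.mul_apply, shiftMat, Matrix.transpose_apply, Matrix.of_apply,
    Matrix.one_apply]
  rw [Finset.sum_eq_single (i - 1)]
  · rw [if_pos (by simp), one_mul]
    by_cases h : i = j
    · subst h; rw [if_pos (by simp), if_pos rfl]
    · rw [if_neg, if_neg h]
      intro hc
      exact h (by rw [hc, sub_add_cancel])
  · intro k _ hk
    rw [if_neg, zero_mul]
    intro hc
    exact hk (by rw [hc]; simp)
  · simp

lemma BS_comm : Bmat n * shiftMat n = shiftMat n * Bmat n := by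
  unfold Bmat
  rw [sub_mul, sub_mul, mul_sub, mul_sub, smul_mul_assoc, mul_smul_comm,
    one_mul, mul_one, shift_orth', shift_orth]

lemma AS_comm : Amat n * shiftMat n = shiftMat n * Amat n := by
  have hB := Bmat_det_isUnit (n := n)
  have hBA : Bmat n * Amat n = 1 := Matrix.mul_nonsing_inv _ hB
  have hAB : Amat n * Bmat n = 1 := Matrix.nonsing_inv_mul _ hB
  calc Amat n * shiftMat n = Amat n * shiftMat n * (Bmat n * Amat n) := by rw [hBA, mul_one]
    _ = Amat n * (shiftMat n * Bmat n) * Amat n := by noncomm_ring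
    _ = Amat n * (Bmat n * shiftMat n) * Amat n := by rw [← BS_comm]
    _ = (Amat n * Bmat n) * (shiftMat n * Amat n) := by noncomm_ring
    _ = shiftMat n * Amat n := by rw [hAB, one_mul]

lemma Bmat_colsum (j : Fin n) : ∑ i, Bmat n i j = 1 := by
  have h1 : ∑ i : Fin n, (if (j : Fin n) = i + 1 then (1:ℝ) else 0) = 1 := by
    rw [Finset.sum_eq_single (j - 1)]
    · rw [if_pos (by simp)]
    · intro k _ hk
      rw [if_neg]
      intro hc
      exact hk (by rw [hc]; simp)
    · simp
  have h2 : ∑ i : Fin n, (if (i : Fin n) = j + 1 then (1:ℝ) else 0) = 1 := by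
    rw [Finset.sum_eq_single (j + 1)] <;> simp
  simp only [Bmat, Matrix.sub_apply, Matrix.smul_apply, Matrix.one_apply,
    Matrix.transpose_apply, shiftMat, Matrix.of_apply, smul_eq_mul]
  rw [Finset.sum_sub_distrib, Finset.sum_sub_distrib, h1, h2]
  simp [Finset.sum_ite_eq, eq_comm]
  norm_num

end MatrixAlg

/-! ### Scalar core inequality -/

lemma scalar_core {n : ℕ} [NeZero n] (hn : 3 ≤ n) (w : Fin n → ℝ) (hw : ∑ i, w i = 0) :
    ∑ i, ((Amat n).mulVec w i) ^ 2 ≤ lam1 n ^ 2 * ∑ i, w i ^ 2 := by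
  have hB := Bmat_det_isUnit (n := n)
  set v := (Amat n).mulVec w with hv
  have hBv : (Bmat n).mulVec v = w := by
    rw [hv, Matrix.mulVec_mulVec]
    rw [show Bmat n * Amat n = 1 from Matrix.mul_nonsing_inv _ hB, Matrix.one_mulVec]
  have hsv : ∑ i, v i = 0 := by
    have : ∑ i, w i = ∑ j, v j := by
      rw [← hBv]
      unfold Matrix.mulVec dotProduct
      rw [Finset.sum_comm]
      refine Finset.sum_congr rfl fun j _ => ?_
      rw [← Finset.sum_mul, Bmat_colsum, one_mul]
    rw [← this]; exact hw
  set s := Real.sin (Real.pi / n) with hs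
  set X := ∑ i, v i ^ 2 with hX
  set Y := ∑ i, w i ^ 2 with hY
  have hXnn : 0 ≤ X := Finset.sum_nonneg fun i _ => sq_nonneg _
  have hYnn : 0 ≤ Y := Finset.sum_nonneg fun i _ => sq_nonneg _
  have hQ : (1 + 4 * s ^ 2) * X ≤ v ⬝ᵥ w := by
    rw [← hBv, quadB]
    have := fin_wirtinger hn v hsv
    rw [← hX] at this
    nlinarith [this]
  have hCS : (v ⬝ᵥ w) ^ 2 ≤ X * Y := by
    rw [hX, hY]
    exact Finset.sum_mul_sq_le_sq_mul_sq univ v w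
  have hμ : (0:ℝ) < 1 + 4 * s ^ 2 := by positivity
  have hP0 : 0 ≤ v ⬝ᵥ w := le_trans (mul_nonneg hμ.le hXnn) hQ
  have h6 : ((1 + 4 * s ^ 2) * X) ^ 2 ≤ (v ⬝ᵥ w) ^ 2 := pow_le_pow_left₀ (mul_nonneg hμ.le hXnn) hQ 2
  have h7 : (1 + 4 * s ^ 2) ^ 2 * X * X ≤ Y * X := by nlinarith
  have hlam : lam1 n = 1 / (1 + 4 * s ^ 2) := rfl
  rcases eq_or_lt_of_le hXnn with hX0 | hXpos
  · rw [← hX0]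
    positivity
  · have h8 : (1 + 4 * s ^ 2) ^ 2 * X ≤ Y := by
      exact le_of_mul_le_mul_right (by linarith [h7]) hXpos
    rw [hlam]
    rw [div_pow, one_pow, div_mul_eq_mul_div, one_mul, le_div_iff₀ (by positivity)]
    nlinarith

section ApplyMat
variable {n : ℕ} [NeZero n]

lemma applyMat_one (g : Fin n → EuclideanSpace ℝ (Fin 3)) :
    applyMat (1 : Matrix (Fin n) (Fin n) ℝ) g = g := by
  funext i
  simp [applyMat, Matrix.one_apply, ite_smul, Finset.sum_ite_eq]

lemma applyMat_mul (M N : Matrix (Fin n) (Fin n) ℝ) (g : Fin n → EuclideanSpace ℝ (Fin 3)) :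
    applyMat (M * N) g = applyMat M (applyMat N g) := by
  funext i
  simp only [applyMat, Matrix.mul_apply, Finset.smul_sum, Finset.sum_smul, smul_smul]
  rw [Finset.sum_comm]

lemma applyMat_sub (M N : Matrix (Fin n) (Fin n) ℝ) (g : Fin n → EuclideanSpace ℝ (Fin 3)) :
    applyMat (M - N) g = applyMat M g - applyMat N g := by
  funext i
  simp [applyMat, sub_smul, Finset.sum_sub_distrib]

lemma shiftTup_eq (g : Fin n → EuclideanSpace ℝ (Fin 3)) :
    shiftTup g = applyMat (shiftMat n) g := by
  funext i
  simp [applyMat, shiftTup, shiftMat, ite_smul, Finset.sum_ite_eq']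

end ApplyMat

theorem stmt6 (n : ℕ) [NeZero n] (hn : 3 ≤ n) (f0 : Fin n → EuclideanSpace ℝ (Fin 3)) :
    sqE (applyMat (Amat n) f0 - shiftTup (applyMat (Amat n) f0)) ≤
      lam1 n ^ 2 * sqE (f0 - shiftTup f0) := by
  have key : applyMat (Amat n) f0 - shiftTup (applyMat (Amat n) f0)
      = applyMat (Amat n) (f0 - shiftTup f0) := by
    rw [shiftTup_eq, shiftTup_eq]
    calc applyMat (Amat n) f0 - applyMat (shiftMat n) (applyMat (Amat n) f0)
        = applyMat 1 (applyMat (Amat n) f0) - applyMat (shiftMat n) (applyMat (Amat n) f0) := by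
          rw [applyMat_one]
      _ = applyMat (1 - shiftMat n) (applyMat (Amat n) f0) := (applyMat_sub _ _ _).symm
      _ = applyMat ((1 - shiftMat n) * Amat n) f0 := (applyMat_mul _ _ _).symm
      _ = applyMat (Amat n * (1 - shiftMat n)) f0 := by
          rw [show (1 - shiftMat n) * Amat n = Amat n * (1 - shiftMat n) from by
            rw [sub_mul, mul_sub, one_mul, mul_one, AS_comm]]
      _ = applyMat (Amat n) (applyMat (1 - shiftMat n) f0) := applyMat_mul _ _ _
      _ = applyMat (Amat n) (applyMat 1 f0 - applyMat (shiftMat n) f0) := by rw [applyMat_sub]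
      _ = applyMat (Amat n) (f0 - applyMat (shiftMat n) f0) := by rw [applyMat_one]
  rw [key]
  set g := f0 - shiftTup f0 with hg
  have hnorm : ∀ h : Fin n → EuclideanSpace ℝ (Fin 3), sqE h = ∑ c : Fin 3, ∑ i, (h i c) ^ 2 := by
    intro h
    rw [sqE, Finset.sum_comm]
    refine Finset.sum_congr rfl fun i _ => ?_
    rw [EuclideanSpace.norm_eq, Real.sq_sqrt (by positivity)]
    exact Finset.sum_congr rfl fun c _ => by rw [Real.norm_eq_abs, sq_abs]
  have hco : ∀ (c : Fin 3) (i : Fin n),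
      (applyMat (Amat n) g i) c = ((Amat n).mulVec (fun j => g j c)) i := by
    intro c i
    show (∑ j, Amat n i j • g j) c = _
    rw [WithLp.ofLp_sum, Finset.sum_apply]
    rfl
  have hzero : ∀ c : Fin 3, ∑ i, g i c = 0 := by
    intro c
    have he : ∀ i, g i c = f0 i c - f0 (i + 1) c := fun i => by
      rw [hg]; simp [shiftTup]
    simp only [he, Finset.sum_sub_distrib]
    rw [sum_shift (fun i => f0 i c), sub_self]
  calc sqE (applyMat (Amat n) g) = ∑ c : Fin 3, ∑ i, (applyMat (Amat n) g i c) ^ 2 := hnorm _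
    _ = ∑ c : Fin 3, ∑ i, (((Amat n).mulVec fun j => g j c) i) ^ 2 := by
        refine Finset.sum_congr rfl fun c _ => Finset.sum_congr rfl fun i _ => ?_
        rw [hco]
    _ ≤ ∑ c : Fin 3, lam1 n ^ 2 * ∑ i, (g i c) ^ 2 :=
        Finset.sum_le_sum fun c _ => scalar_core hn _ (hzero c)
    _ = lam1 n ^ 2 * sqE g := by rw [← Finset.mul_sum, hnorm]
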